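/- Let p ∈ (0,1]. Then for every t with 1 ≤ t ≤ 3/(2-p), t^{p/2} + p(2-p)/(3√t) - p(1-p)/2 ≥ (1 + ((p+1)/3) t)^{p/2}. -/

import Mathlib

theorem stmt_7 (p : ℝ) (hp : p ∈ Set.Ioc (0 : ℝ) 1) (t : ℝ) (ht1 : 1 ≤ t)
    (ht2 : t ≤ 3 / (2 - p)) :
    (1 + (p + 1) / 3 * t) ^ (p / 2) ≤
      t ^ (p / 2) + p * (2 - p) / (3 * Real.sqrt t) - p * (1 - p) / 2 := by
  obtain ⟨hp0, hp1⟩ := hp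
  have ht0 : (0 : ℝ) < t := lt_of_lt_of_le one_pos ht1
  set y : ℝ := 1 + (p + 1) / 3 * t with hy
  have h2p : (0 : ℝ) < 2 - p := by linarith
  have hty : t ≤ y := by
    have := (le_div_iff₀ h2p).mp ht2
    simp only [hy]; nlinarith
  set s : ℝ := Real.sqrt t with hsdef
  have hs1 : 1 ≤ s := by
    rw [hsdef, show (1:ℝ) = Real.sqrt 1 by simp]
    exact Real.sqrt_le_sqrt ht1
  have hs0 : 0 < s := lt_of_lt_of_le one_pos hs1
  have hst : s ^ 2 = t := Real.sq_sqrt ht0.le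
  -- Bernoulli / tangent line step
  have hber : y ^ (p / 2) ≤ t ^ (p / 2) * (1 + (p / 2) * ((y - t) / t)) := by
    have h1 : (1 + (y - t) / t) ^ (p / 2) ≤ 1 + (p / 2) * ((y - t) / t) :=
      rpow_one_add_le_one_add_mul_self
        (by have := div_nonneg (by linarith : (0:ℝ) ≤ y - t) ht0.le; linarith)
        (by linarith) (by linarith)
    have h2 : 1 + (y - t) / t = y / t := by field_simp; ring
    rw [h2] at h1
    have hy0 : (0:ℝ) ≤ y := by rw [hy]; nlinarith
    have h3 : (y / t) ^ (p / 2) = y ^ (p / 2) / t ^ (p / 2) :=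
      Real.div_rpow hy0 ht0.le _
    rw [h3] at h1
    have h4 : (0 : ℝ) < t ^ (p / 2) := Real.rpow_pos_of_pos ht0 _
    calc y ^ (p / 2) = y ^ (p / 2) / t ^ (p / 2) * t ^ (p / 2) := by field_simp
      _ ≤ (1 + (p / 2) * ((y - t) / t)) * t ^ (p / 2) := by
          exact mul_le_mul_of_nonneg_right h1 h4.le
      _ = t ^ (p / 2) * (1 + (p / 2) * ((y - t) / t)) := by ring
  -- t^(p/2 - 1) ≤ 1/s
  have hpow : t ^ (p / 2) / t ≤ 1 / s := by
    have e1 : t ^ (p / 2) / t = t ^ (p / 2 - 1) := by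
      rw [Real.rpow_sub ht0, Real.rpow_one]
    have e2 : (1 : ℝ) / s = t ^ (-(1/2) : ℝ) := by
      rw [Real.rpow_neg ht0.le, hsdef, Real.sqrt_eq_rpow, one_div]
    rw [e1, e2]
    exact Real.rpow_le_rpow_of_exponent_le ht1 (by linarith)
  -- combine
  have hkey : t ^ (p / 2) * ((p / 2) * ((y - t) / t)) ≤ (p / 2) * ((y - t) / s) := by
    have hyt : 0 ≤ y - t := by linarith
    have : t ^ (p / 2) * ((p / 2) * ((y - t) / t)) =
        (p / 2) * (y - t) * (t ^ (p / 2) / t) := by ring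
    rw [this]
    have : (p / 2) * ((y - t) / s) = (p / 2) * (y - t) * (1 / s) := by ring
    rw [this]
    exact mul_le_mul_of_nonneg_left hpow (by positivity)
  -- final polynomial inequality in s
  have hfinal : (p / 2) * ((y - t) / s) ≤ p * (2 - p) / (3 * s) - p * (1 - p) / 2 := by
    have hne : s ≠ 0 := ne_of_gt hs0
    have key : p * (2 - p) / (3 * s) - p * (1 - p) / 2 - (p / 2) * ((y - t) / s)
        = p * ((s - 1) * ((2 - p) * s + (2 * p - 1))) / (6 * s) := by
      rw [hy, ← hst]; field_simp; ring
    have hpos : 0 ≤ p * ((s - 1) * ((2 - p) * s + (2 * p - 1))) / (6 * s) := by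
      apply div_nonneg _ (by linarith)
      apply mul_nonneg hp0.le
      apply mul_nonneg (by linarith)
      nlinarith
    linarith [key ▸ hpos]
  calc y ^ (p / 2) ≤ t ^ (p / 2) * (1 + (p / 2) * ((y - t) / t)) := hber
    _ = t ^ (p / 2) + t ^ (p / 2) * ((p / 2) * ((y - t) / t)) := by ring
    _ ≤ t ^ (p / 2) + (p / 2) * ((y - t) / s) := by linarith
    _ ≤ t ^ (p / 2) + (p * (2 - p) / (3 * s) - p * (1 - p) / 2) := by linarith
    _ = t ^ (p / 2) + p * (2 - p) / (3 * s) - p * (1 - p) / 2 := by ring
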